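/- For jointly distributed random sequences X^n = (X_1,...,X_n) and Y^n = (Y_1,...,Y_n) on finite alphabets, the directed information satisfies Kim's identity: sum_{i=1}^n I(Y_i; X^i | Y^{i-1}) = sum_{i=1}^n I(X_i; Y_i^n | X^{i-1}, Y^{i-1}), where Y_i^n = (Y_i,...,Y_n). -/

import Mathlib

/-- Conditional mutual information `I(f(ω); g(ω) | h(ω))` of finite-valued random
variables under the pmf `p` on a finite sample space `Ω`, defined by the usual sum
`∑ q(a,b,c) log (q(a,b,c) q(c) / (q(a,c) q(b,c)))`. -/
noncomputable def condMI {Ω A B C : Type} [Fintype Ω] [Fintype A] [Fintype B] [Fintype C]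
    [DecidableEq A] [DecidableEq B] [DecidableEq C]
    (p : Ω → ℝ) (f : Ω → A) (g : Ω → B) (h : Ω → C) : ℝ :=
  ∑ a : A, ∑ b : B, ∑ c : C,
    (∑ ω ∈ Finset.univ.filter (fun ω => f ω = a ∧ g ω = b ∧ h ω = c), p ω) *
      Real.log
        (((∑ ω ∈ Finset.univ.filter (fun ω => f ω = a ∧ g ω = b ∧ h ω = c), p ω) *
            (∑ ω ∈ Finset.univ.filter (fun ω => h ω = c), p ω)) /
          ((∑ ω ∈ Finset.univ.filter (fun ω => f ω = a ∧ h ω = c), p ω) *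
            (∑ ω ∈ Finset.univ.filter (fun ω => g ω = b ∧ h ω = c), p ω)))

noncomputable def ent2 {Ω V : Type} [Fintype Ω] [DecidableEq V] (p : Ω → ℝ) (φ : Ω → V) : ℝ :=
  -∑ ω, p ω * Real.log (∑ ω' ∈ Finset.univ.filter (fun ω' => φ ω' = φ ω), p ω')

lemma ent2_congr {Ω V W : Type} [Fintype Ω] [DecidableEq V] [DecidableEq W]
    (p : Ω → ℝ) (φ : Ω → V) (ψ : Ω → W)
    (h : ∀ ω ω', φ ω = φ ω' ↔ ψ ω = ψ ω') : ent2 p φ = ent2 p ψ := by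
  have hf : ∀ ω, (Finset.univ.filter (fun ω' => φ ω' = φ ω))
      = (Finset.univ.filter (fun ω' => ψ ω' = ψ ω)) :=
    fun ω => Finset.filter_congr (fun ω' _ => h ω' ω)
  simp only [ent2, hf]

lemma sum_fiber_mul {Ω V : Type} [Fintype Ω] [Fintype V] [DecidableEq V]
    (p : Ω → ℝ) (φ : Ω → V) (L : V → ℝ) :
    ∑ v, (∑ ω ∈ Finset.univ.filter (fun ω => φ ω = v), p ω) * L v
      = ∑ ω, p ω * L (φ ω) := by
  rw [← Finset.sum_fiberwise Finset.univ φ (fun ω => p ω * L (φ ω))]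
  refine Finset.sum_congr rfl fun v _ => ?_
  rw [Finset.sum_mul]
  exact Finset.sum_congr rfl fun ω hω => by rw [(Finset.mem_filter.mp hω).2]

lemma triple_fiber {Ω A B C : Type} [Fintype Ω] [Fintype A] [Fintype B] [Fintype C]
    [DecidableEq A] [DecidableEq B] [DecidableEq C]
    (p : Ω → ℝ) (f : Ω → A) (g : Ω → B) (h : Ω → C) (L : A → B → C → ℝ) :
    ∑ a : A, ∑ b : B, ∑ c : C,
      (∑ ω ∈ Finset.univ.filter (fun ω => f ω = a ∧ g ω = b ∧ h ω = c), p ω) * L a b c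
      = ∑ ω, p ω * L (f ω) (g ω) (h ω) := by
  have := sum_fiber_mul p (fun ω => (f ω, g ω, h ω)) (fun v => L v.1 v.2.1 v.2.2)
  simpa [Fintype.sum_prod_type, Prod.mk.injEq] using this

lemma condMI_eq {Ω A B C : Type} [Fintype Ω] [Fintype A] [Fintype B] [Fintype C]
    [DecidableEq A] [DecidableEq B] [DecidableEq C]
    (p : Ω → ℝ) (hp0 : ∀ ω, 0 ≤ p ω) (f : Ω → A) (g : Ω → B) (h : Ω → C) :
    condMI p f g h =
      ent2 p (fun ω => (f ω, h ω)) + ent2 p (fun ω => (g ω, h ω))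
        - ent2 p (fun ω => (f ω, g ω, h ω)) - ent2 p h := by
  classical
  set q3 : A → B → C → ℝ :=
    fun a b c => ∑ ω ∈ Finset.univ.filter (fun ω => f ω = a ∧ g ω = b ∧ h ω = c), p ω with hq3
  set qfh : A → C → ℝ := fun a c => ∑ ω ∈ Finset.univ.filter (fun ω => f ω = a ∧ h ω = c), p ω with hqfh
  set qgh : B → C → ℝ := fun b c => ∑ ω ∈ Finset.univ.filter (fun ω => g ω = b ∧ h ω = c), p ω with hqgh
  set qc : C → ℝ := fun c => ∑ ω ∈ Finset.univ.filter (fun ω => h ω = c), p ω with hqc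
  have step1 : condMI p f g h = ∑ a : A, ∑ b : B, ∑ c : C,
      (q3 a b c * Real.log (q3 a b c) + q3 a b c * Real.log (qc c)
        - q3 a b c * Real.log (qfh a c) - q3 a b c * Real.log (qgh b c)) := by
    unfold condMI
    refine Finset.sum_congr rfl fun a _ => Finset.sum_congr rfl fun b _ =>
      Finset.sum_congr rfl fun c _ => ?_
    by_cases h0 : q3 a b c = 0
    · have h0' : (∑ ω ∈ Finset.univ.filter (fun ω => f ω = a ∧ g ω = b ∧ h ω = c), p ω) = 0 := h0
      rw [h0', h0]; ring
    · have hnn : ∀ (s : Finset Ω), 0 ≤ ∑ ω ∈ s, p ω :=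
        fun s => Finset.sum_nonneg fun ω _ => hp0 ω
      have h3pos : 0 < q3 a b c := lt_of_le_of_ne (hnn _) (Ne.symm h0)
      have hsub1 : Finset.univ.filter (fun ω => f ω = a ∧ g ω = b ∧ h ω = c)
          ⊆ Finset.univ.filter (fun ω => f ω = a ∧ h ω = c) :=
        Finset.monotone_filter_right _ (fun ω _ hω => ⟨hω.1, hω.2.2⟩)
      have hsub2 : Finset.univ.filter (fun ω => f ω = a ∧ g ω = b ∧ h ω = c)
          ⊆ Finset.univ.filter (fun ω => g ω = b ∧ h ω = c) :=
        Finset.monotone_filter_right _ (fun ω _ hω => ⟨hω.2.1, hω.2.2⟩)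
      have hsub3 : Finset.univ.filter (fun ω => f ω = a ∧ g ω = b ∧ h ω = c)
          ⊆ Finset.univ.filter (fun ω => h ω = c) :=
        Finset.monotone_filter_right _ (fun ω _ hω => hω.2.2)
      have h1pos : 0 < qfh a c :=
        lt_of_lt_of_le h3pos (Finset.sum_le_sum_of_subset_of_nonneg hsub1 fun ω _ _ => hp0 ω)
      have h2pos : 0 < qgh b c :=
        lt_of_lt_of_le h3pos (Finset.sum_le_sum_of_subset_of_nonneg hsub2 fun ω _ _ => hp0 ω)
      have hcpos : 0 < qc c :=
        lt_of_lt_of_le h3pos (Finset.sum_le_sum_of_subset_of_nonneg hsub3 fun ω _ _ => hp0 ω)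
      rw [Real.log_div (by positivity) (by positivity),
        Real.log_mul (ne_of_gt h3pos) (ne_of_gt hcpos),
        Real.log_mul (ne_of_gt h1pos) (ne_of_gt h2pos)]
      ring
  rw [step1]
  simp only [Finset.sum_add_distrib, Finset.sum_sub_distrib]
  have T1 : ∑ a : A, ∑ b : B, ∑ c : C, q3 a b c * Real.log (q3 a b c)
      = -ent2 p (fun ω => (f ω, g ω, h ω)) := by
    rw [triple_fiber p f g h (fun a b c => Real.log (q3 a b c))]
    simp [ent2, Prod.mk.injEq, hq3]
  have T4 : ∑ a : A, ∑ b : B, ∑ c : C, q3 a b c * Real.log (qc c)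
      = -ent2 p h := by
    rw [triple_fiber p f g h (fun a b c => Real.log (qc c))]
    simp [ent2, hqc]
  have T2 : ∑ a : A, ∑ b : B, ∑ c : C, q3 a b c * Real.log (qfh a c)
      = -ent2 p (fun ω => (f ω, h ω)) := by
    rw [triple_fiber p f g h (fun a b c => Real.log (qfh a c))]
    simp [ent2, Prod.mk.injEq, hqfh]
  have T3 : ∑ a : A, ∑ b : B, ∑ c : C, q3 a b c * Real.log (qgh b c)
      = -ent2 p (fun ω => (g ω, h ω)) := by
    rw [triple_fiber p f g h (fun a b c => Real.log (qgh b c))]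
    simp [ent2, Prod.mk.injEq, hqgh]
  rw [T1, T2, T3, T4]
  ring

def trunc {α : Type} {n : ℕ} (j : ℕ) (f : Fin n → α) : Fin n → Option α :=
  fun k => if k.val < j then some (f k) else none

lemma trunc_eq_iff {α : Type} {n : ℕ} {j : ℕ} {f g : Fin n → α} :
    trunc j f = trunc j g ↔ ∀ k : Fin n, k.val < j → f k = g k := by
  constructor
  · intro H k hk
    have := congrFun H k
    simpa [trunc, hk] using this
  · intro H
    funext k
    unfold trunc
    by_cases hk : k.val < j
    · simp [hk, H k hk]
    · simp [hk]

lemma hPref {α : Type} {n m : ℕ} (f g : Fin n → α) (pf : ∀ j : Fin m, (j : ℕ) < n) :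
    ((fun j : Fin m => f ⟨j.val, pf j⟩) = fun j : Fin m => g ⟨j.val, pf j⟩)
      ↔ ∀ k : Fin n, k.val < m → f k = g k := by
  rw [funext_iff]
  constructor
  · intro H k hk; exact H ⟨k.val, hk⟩
  · intro H j; exact H ⟨j.val, pf j⟩ j.isLt

lemma hSuff {α : Type} {n i : ℕ} (f g : Fin n → α) (pf : ∀ j : Fin (n - i), i + (j : ℕ) < n) :
    ((fun j : Fin (n - i) => f ⟨i + j.val, pf j⟩) = fun j : Fin (n - i) => g ⟨i + j.val, pf j⟩)
      ↔ ∀ k : Fin n, i ≤ k.val → f k = g k := by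
  rw [funext_iff]
  constructor
  · intro H k hk
    have hlt : k.val - i < n - i := by have := k.isLt; omega
    have h2 := H ⟨k.val - i, hlt⟩
    have he : (⟨i + (⟨k.val - i, hlt⟩ : Fin (n - i)).val, pf ⟨k.val - i, hlt⟩⟩ : Fin n) = k :=
      Fin.ext (show i + (k.val - i) = k.val by omega)
    rwa [he] at h2
  · intro H j; exact H ⟨i + j.val, pf j⟩ (Nat.le_add_right _ _)

noncomputable def eY {X Y : Type} [Fintype X] [Fintype Y] [DecidableEq X] [DecidableEq Y]
    (n : ℕ) (p : (Fin n → X) × (Fin n → Y) → ℝ) (j : ℕ) : ℝ :=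
  ent2 p (fun ω => trunc j ω.2)

noncomputable def eXY {X Y : Type} [Fintype X] [Fintype Y] [DecidableEq X] [DecidableEq Y]
    (n : ℕ) (p : (Fin n → X) × (Fin n → Y) → ℝ) (a b : ℕ) : ℝ :=
  ent2 p (fun ω => (trunc a ω.1, trunc b ω.2))

noncomputable def eXfY {X Y : Type} [Fintype X] [Fintype Y] [DecidableEq X] [DecidableEq Y]
    (n : ℕ) (p : (Fin n → X) × (Fin n → Y) → ℝ) (a : ℕ) : ℝ :=
  ent2 p (fun ω => (trunc a ω.1, ω.2))

lemma tele (F : ℕ → ℝ) (n : ℕ) :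
    ∑ i : Fin n, (F (i.val + 1) - F i.val) = F n - F 0 := by
  induction n with
  | zero => simp
  | succ m ih =>
    rw [Fin.sum_univ_castSucc]
    simp only [Fin.coe_castSucc, Fin.val_last]
    rw [ih]; ring

theorem kim_identity {X Y : Type} [Fintype X] [DecidableEq X] [Fintype Y] [DecidableEq Y]
    (n : ℕ) (p : (Fin n → X) × (Fin n → Y) → ℝ)
    (hp0 : ∀ ω, 0 ≤ p ω) (hp1 : ∑ ω, p ω = 1) :
    ∑ i : Fin n,
        condMI p (fun ω => ω.2 i)
          (fun ω => fun j : Fin (i.val + 1) =>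
            ω.1 ⟨j.val, by have h1 := j.isLt; have h2 := i.isLt; omega⟩)
          (fun ω => fun j : Fin i.val =>
            ω.2 ⟨j.val, by have h1 := j.isLt; have h2 := i.isLt; omega⟩) =
      ∑ i : Fin n,
        condMI p (fun ω => ω.1 i)
          (fun ω => fun j : Fin (n - i.val) =>
            ω.2 ⟨i.val + j.val, by have h1 := j.isLt; have h2 := i.isLt; omega⟩)
          (fun ω =>
            ((fun j : Fin i.val =>
                ω.1 ⟨j.val, by have h1 := j.isLt; have h2 := i.isLt; omega⟩),
             (fun j : Fin i.val =>
                ω.2 ⟨j.val, by have h1 := j.isLt; have h2 := i.isLt; omega⟩))) := by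
  classical
  have hLterm : ∀ i : Fin n,
      condMI p (fun ω => ω.2 i)
          (fun ω => fun j : Fin (i.val + 1) =>
            ω.1 ⟨j.val, by have h1 := j.isLt; have h2 := i.isLt; omega⟩)
          (fun ω => fun j : Fin i.val =>
            ω.2 ⟨j.val, by have h1 := j.isLt; have h2 := i.isLt; omega⟩)
        = eY n p (i.val + 1) + eXY n p (i.val + 1) i.val
            - eXY n p (i.val + 1) (i.val + 1) - eY n p i.val := by
    intro i
    rw [condMI_eq p hp0]
    have e1 : ent2 p (fun ω : (Fin n → X) × (Fin n → Y) =>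
        (ω.2 i, fun j : Fin i.val =>
          ω.2 ⟨j.val, by have h1 := j.isLt; have h2 := i.isLt; omega⟩))
        = eY n p (i.val + 1) := by
      refine ent2_congr p _ _ fun ω ω' => ?_
      simp only [Prod.mk.injEq]
      rw [hPref ω.2 ω'.2]
      simp only [trunc_eq_iff]
      constructor
      · rintro ⟨h1, h2⟩ k hk
        rcases Nat.lt_or_ge k.val i.val with h | h
        · exact h2 k h
        · have hk2 : k = i := Fin.ext (by omega)
          rw [hk2]; exact h1
      · intro H
        exact ⟨H i (by omega), fun k hk => H k (by omega)⟩
    have e2 : ent2 p (fun ω : (Fin n → X) × (Fin n → Y) =>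
        ((fun j : Fin (i.val + 1) =>
            ω.1 ⟨j.val, by have h1 := j.isLt; have h2 := i.isLt; omega⟩),
         (fun j : Fin i.val =>
            ω.2 ⟨j.val, by have h1 := j.isLt; have h2 := i.isLt; omega⟩)))
        = eXY n p (i.val + 1) i.val := by
      refine ent2_congr p _ _ fun ω ω' => ?_
      simp only [Prod.mk.injEq]
      rw [hPref ω.1 ω'.1, hPref ω.2 ω'.2]
      simp only [trunc_eq_iff]
    have e3 : ent2 p (fun ω : (Fin n → X) × (Fin n → Y) =>
        (ω.2 i,
         (fun j : Fin (i.val + 1) =>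
            ω.1 ⟨j.val, by have h1 := j.isLt; have h2 := i.isLt; omega⟩),
         (fun j : Fin i.val =>
            ω.2 ⟨j.val, by have h1 := j.isLt; have h2 := i.isLt; omega⟩)))
        = eXY n p (i.val + 1) (i.val + 1) := by
      refine ent2_congr p _ _ fun ω ω' => ?_
      simp only [Prod.mk.injEq]
      rw [hPref ω.1 ω'.1, hPref ω.2 ω'.2]
      simp only [trunc_eq_iff]
      constructor
      · rintro ⟨h1, h2, h3⟩
        refine ⟨h2, fun k hk => ?_⟩
        rcases Nat.lt_or_ge k.val i.val with h | h
        · exact h3 k h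
        · have hk2 : k = i := Fin.ext (by omega)
          rw [hk2]; exact h1
      · rintro ⟨h2, h3⟩
        exact ⟨h3 i (by omega), h2, fun k hk => h3 k (by omega)⟩
    have e4 : ent2 p (fun ω : (Fin n → X) × (Fin n → Y) =>
        fun j : Fin i.val =>
          ω.2 ⟨j.val, by have h1 := j.isLt; have h2 := i.isLt; omega⟩)
        = eY n p i.val := by
      refine ent2_congr p _ _ fun ω ω' => ?_
      rw [hPref ω.2 ω'.2]
      simp only [trunc_eq_iff]
    linarith [e1, e2, e3, e4]
  have hRterm : ∀ i : Fin n,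
      condMI p (fun ω => ω.1 i)
          (fun ω => fun j : Fin (n - i.val) =>
            ω.2 ⟨i.val + j.val, by have h1 := j.isLt; have h2 := i.isLt; omega⟩)
          (fun ω =>
            ((fun j : Fin i.val =>
                ω.1 ⟨j.val, by have h1 := j.isLt; have h2 := i.isLt; omega⟩),
             (fun j : Fin i.val =>
                ω.2 ⟨j.val, by have h1 := j.isLt; have h2 := i.isLt; omega⟩)))
        = eXY n p (i.val + 1) i.val + eXfY n p i.val
            - eXfY n p (i.val + 1) - eXY n p i.val i.val := by
    intro i
    rw [condMI_eq p hp0]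
    have e1 : ent2 p (fun ω : (Fin n → X) × (Fin n → Y) =>
        (ω.1 i,
         ((fun j : Fin i.val =>
             ω.1 ⟨j.val, by have h1 := j.isLt; have h2 := i.isLt; omega⟩),
          (fun j : Fin i.val =>
             ω.2 ⟨j.val, by have h1 := j.isLt; have h2 := i.isLt; omega⟩))))
        = eXY n p (i.val + 1) i.val := by
      refine ent2_congr p _ _ fun ω ω' => ?_
      simp only [Prod.mk.injEq]
      rw [hPref ω.1 ω'.1, hPref ω.2 ω'.2]
      simp only [trunc_eq_iff]
      constructor
      · rintro ⟨h1, h2, h3⟩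
        refine ⟨fun k hk => ?_, h3⟩
        rcases Nat.lt_or_ge k.val i.val with h | h
        · exact h2 k h
        · have hk2 : k = i := Fin.ext (by omega)
          rw [hk2]; exact h1
      · rintro ⟨h2, h3⟩
        exact ⟨h2 i (by omega), fun k hk => h2 k (by omega), h3⟩
    have e2 : ent2 p (fun ω : (Fin n → X) × (Fin n → Y) =>
        ((fun j : Fin (n - i.val) =>
            ω.2 ⟨i.val + j.val, by have h1 := j.isLt; have h2 := i.isLt; omega⟩),
         ((fun j : Fin i.val =>
             ω.1 ⟨j.val, by have h1 := j.isLt; have h2 := i.isLt; omega⟩),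
          (fun j : Fin i.val =>
             ω.2 ⟨j.val, by have h1 := j.isLt; have h2 := i.isLt; omega⟩))))
        = eXfY n p i.val := by
      refine ent2_congr p _ _ fun ω ω' => ?_
      simp only [Prod.mk.injEq]
      rw [hSuff ω.2 ω'.2, hPref ω.1 ω'.1, hPref ω.2 ω'.2]
      simp only [trunc_eq_iff]
      constructor
      · rintro ⟨h1, h2, h3⟩
        refine ⟨h2, funext fun k => ?_⟩
        rcases Nat.lt_or_ge k.val i.val with h | h
        · exact h3 k h
        · exact h1 k h
      · rintro ⟨h2, h3⟩
        exact ⟨fun k _ => congrFun h3 k, h2, fun k _ => congrFun h3 k⟩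
    have e3 : ent2 p (fun ω : (Fin n → X) × (Fin n → Y) =>
        (ω.1 i,
         (fun j : Fin (n - i.val) =>
            ω.2 ⟨i.val + j.val, by have h1 := j.isLt; have h2 := i.isLt; omega⟩),
         ((fun j : Fin i.val =>
             ω.1 ⟨j.val, by have h1 := j.isLt; have h2 := i.isLt; omega⟩),
          (fun j : Fin i.val =>
             ω.2 ⟨j.val, by have h1 := j.isLt; have h2 := i.isLt; omega⟩))))
        = eXfY n p (i.val + 1) := by
      refine ent2_congr p _ _ fun ω ω' => ?_
      simp only [Prod.mk.injEq]
      rw [hSuff ω.2 ω'.2, hPref ω.1 ω'.1, hPref ω.2 ω'.2]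
      simp only [trunc_eq_iff]
      constructor
      · rintro ⟨h0, h1, h2, h3⟩
        constructor
        · intro k hk
          rcases Nat.lt_or_ge k.val i.val with h | h
          · exact h2 k h
          · have hk2 : k = i := Fin.ext (by omega)
            rw [hk2]; exact h0
        · funext k
          rcases Nat.lt_or_ge k.val i.val with h | h
          · exact h3 k h
          · exact h1 k h
      · rintro ⟨h2, h3⟩
        exact ⟨h2 i (by omega), fun k _ => congrFun h3 k, fun k hk => h2 k (by omega),
          fun k _ => congrFun h3 k⟩
    have e4 : ent2 p (fun ω : (Fin n → X) × (Fin n → Y) =>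
        ((fun j : Fin i.val =>
            ω.1 ⟨j.val, by have h1 := j.isLt; have h2 := i.isLt; omega⟩),
         (fun j : Fin i.val =>
            ω.2 ⟨j.val, by have h1 := j.isLt; have h2 := i.isLt; omega⟩)))
        = eXY n p i.val i.val := by
      refine ent2_congr p _ _ fun ω ω' => ?_
      simp only [Prod.mk.injEq]
      rw [hPref ω.1 ω'.1, hPref ω.2 ω'.2]
      simp only [trunc_eq_iff]
    linarith [e1, e2, e3, e4]
  -- endpoint identities
  have hE1 : eXY n p n n = eXfY n p n := by
    refine ent2_congr p _ _ fun ω ω' => ?_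
    simp only [Prod.mk.injEq, trunc_eq_iff]
    constructor
    · rintro ⟨h1, h2⟩; exact ⟨h1, funext fun k => h2 k k.isLt⟩
    · rintro ⟨h1, h2⟩; exact ⟨h1, fun k _ => congrFun h2 k⟩
  have hE2 : eXY n p 0 0 = eY n p 0 := by
    refine ent2_congr p _ _ fun ω ω' => ?_
    simp only [Prod.mk.injEq, trunc_eq_iff]
    constructor
    · rintro ⟨_, h2⟩; exact h2
    · intro h2; exact ⟨fun k hk => absurd hk (by omega), h2⟩
  have hE3 : eXfY n p 0 = eY n p n := by
    refine ent2_congr p _ _ fun ω ω' => ?_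
    simp only [Prod.mk.injEq, trunc_eq_iff]
    constructor
    · rintro ⟨_, h2⟩; exact fun k _ => congrFun h2 k
    · intro h2
      exact ⟨fun k hk => absurd hk (by omega), funext fun k => h2 k k.isLt⟩
  have key : ∑ i : Fin n, (eY n p (i.val + 1) + eXY n p (i.val + 1) i.val
        - eXY n p (i.val + 1) (i.val + 1) - eY n p i.val)
      = ∑ i : Fin n, (eXY n p (i.val + 1) i.val + eXfY n p i.val
        - eXfY n p (i.val + 1) - eXY n p i.val i.val) := by
    rw [← sub_eq_zero, ← Finset.sum_sub_distrib]
    set F : ℕ → ℝ := fun j => eY n p j + eXfY n p j - eXY n p j j with hF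
    have h1 : ∀ i : Fin n,
        (eY n p (i.val + 1) + eXY n p (i.val + 1) i.val
          - eXY n p (i.val + 1) (i.val + 1) - eY n p i.val)
        - (eXY n p (i.val + 1) i.val + eXfY n p i.val
          - eXfY n p (i.val + 1) - eXY n p i.val i.val)
        = F (i.val + 1) - F i.val := by
      intro i
      simp only [hF]
      ring
    rw [Finset.sum_congr rfl fun i _ => h1 i, tele F n]
    simp only [hF]
    linarith [hE1, hE2, hE3]
  exact Eq.trans (Finset.sum_congr rfl fun i _ => hLterm i)
    (Eq.trans key (Finset.sum_congr rfl fun i _ => (hRterm i).symm))
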